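/- There exists a decreasing sequence ⟨f_n : n ∈ ℕ⟩ of functions from [0,1] to ℝ (i.e. f_{n+1}(x) ≤ f_n(x) for all n and x) converging pointwise to 0 such that every subset A ⊆ [0,1] on which ⟨f_n⟩ converges uniformly to 0 has Lebesgue inner measure zero. -/

import Mathlib

open MeasureTheory Filter Set Pointwise
open scoped ENNReal

namespace Stmt0Aux

noncomputable section

/-- The rationals as an additive subgroup of `ℝ`. -/
def G : AddSubgroup ℝ := AddMonoidHom.range (Rat.castHom ℝ).toAddMonoidHom

/-- A choice of coset representative for `x + ℚ`. -/
def r (x : ℝ) : ℝ := (QuotientAddGroup.mk x : ℝ ⧸ G).out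

lemma hr (x : ℝ) : ∃ a : ℚ, (a : ℝ) = x - r x := by
  have h : (QuotientAddGroup.mk (r x) : ℝ ⧸ G) = QuotientAddGroup.mk x := by
    simp [r]
  have h2 : -(r x) + x ∈ G := (QuotientAddGroup.eq (s := G)).mp h
  obtain ⟨a, ha⟩ := h2
  exact ⟨a, by simpa [sub_eq_neg_add] using ha⟩

lemma r_eq {x y : ℝ} (c : ℚ) (h : x - y = (c : ℝ)) : r x = r y := by
  have h2 : (QuotientAddGroup.mk x : ℝ ⧸ G) = QuotientAddGroup.mk y := by
    refine (QuotientAddGroup.eq (s := G)).mpr ⟨-c, ?_⟩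
    show ((-c : ℚ) : ℝ) = -x + y
    push_cast
    linarith
  simp [r, h2]

/-- The rational offset of `x` from its coset representative. -/
def q (x : ℝ) : ℚ := (hr x).choose

lemma hq (x : ℝ) : ((q x : ℚ) : ℝ) = x - r x := (hr x).choose_spec

lemma q_sub {x y : ℝ} (c : ℚ) (h : x - y = (c : ℝ)) : q x - q y = c := by
  have hrxy := r_eq c h
  have hx := hq x
  have hy := hq y
  have : ((q x - q y : ℚ) : ℝ) = (c : ℝ) := by push_cast; rw [hx, hy, hrxy]; linarith
  exact_mod_cast this

/-- Any measurable set of positive measure contains points with `Encodable.encode (q ·)`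
arbitrarily large; equivalently it cannot sit inside `{x | encode (q x) < N}`. -/
lemma key (N : ℕ) (T : Set ℝ) (hT : MeasurableSet T)
    (hsub : T ⊆ {x : ℝ | Encodable.encode (q x) < N}) : volume T = 0 := by
  by_contra h0
  have hpos : 0 < volume T := pos_iff_ne_zero.mpr h0
  have hnhds : T - T ∈ nhds (0 : ℝ) :=
    MeasureTheory.Measure.sub_mem_nhds_zero_of_addHaar_pos volume T hT hpos
  obtain ⟨δ, hδpos, hball⟩ := Metric.mem_nhds_iff.mp hnhds
  -- the finite set of possible rational differences
  set QN : Set ℚ := {a : ℚ | Encodable.encode a < N} with hQN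
  have hQNfin : QN.Finite := by
    have : QN = Encodable.encode ⁻¹' (Set.Iio N) := rfl
    rw [this]
    exact (Set.finite_Iio N).preimage (Encodable.encode_injective.injOn)
  set D : Set ℝ := (fun p : ℚ × ℚ => ((p.1 - p.2 : ℚ) : ℝ)) '' (QN ×ˢ QN) with hD
  have hDfin : D.Finite := (hQNfin.prod hQNfin).image _
  -- pick a rational in (0, δ) avoiding D
  obtain ⟨δ', hδ'0, hδ'δ⟩ := exists_rat_btwn hδpos
  set g : ℕ → ℝ := fun j => ((δ' / (j + 2) : ℚ) : ℝ) with hg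
  have hginj : Function.Injective g := by
    intro a b hab
    have hδ'pos : (0 : ℚ) < δ' := by exact_mod_cast hδ'0
    have hab' : (δ' / ((a : ℚ) + 2)) = δ' / ((b : ℚ) + 2) := by
      have := hab
      simp only [hg] at this
      exact_mod_cast this
    have ha2 : ((a : ℚ) + 2) > 0 := by positivity
    have hb2 : ((b : ℚ) + 2) > 0 := by positivity
    have h2 : (a : ℚ) = (b : ℚ) := by
      rw [div_eq_div_iff (ne_of_gt ha2) (ne_of_gt hb2)] at hab'
      have h := mul_left_cancel₀ (ne_of_gt hδ'pos) hab'
      linarith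
    exact_mod_cast h2
  have hrange : (Set.range g).Infinite := Set.infinite_range_of_injective hginj
  obtain ⟨x0, hx0r, hx0D⟩ := (hrange.diff hDfin).nonempty
  obtain ⟨j, hj⟩ := hx0r
  have hδ'pos : (0 : ℚ) < δ' := by exact_mod_cast hδ'0
  have hcpos : (0 : ℚ) < δ' / (j + 2) := by positivity
  have hcδ : ((δ' / (j + 2) : ℚ) : ℝ) < δ := by
    have h1 : (δ' / (j + 2) : ℚ) ≤ δ' := by
      rw [div_le_iff₀ (by positivity)]
      nlinarith
    calc ((δ' / (j + 2) : ℚ) : ℝ) ≤ (δ' : ℝ) := by exact_mod_cast h1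
      _ < δ := hδ'δ
  -- x0 is in the ball, hence in T - T
  have hx0ball : x0 ∈ Metric.ball (0 : ℝ) δ := by
    rw [← hj]
    simp only [Metric.mem_ball, dist_zero_right, Real.norm_eq_abs, hg]
    rw [abs_of_pos (by exact_mod_cast hcpos)]
    exact hcδ
  obtain ⟨x, hx, y, hy, hxy⟩ := hball hx0ball
  -- but then x0 ∈ D, contradiction
  have hqd : q x - q y = δ' / (j + 2) := by
    apply q_sub
    have hxy' : x - y = x0 := hxy
    rw [hxy', ← hj]
  apply hx0D
  refine ⟨(q x, q y), ⟨hsub hx, hsub hy⟩, ?_⟩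
  rw [← hj]
  simp [hg, hqd]

end

end Stmt0Aux

/-- There is a decreasing sequence of functions `[0,1] → ℝ` converging
pointwise to `0` such that every subset `A ⊆ [0,1]` on which the sequence converges
uniformly to `0` has Lebesgue inner measure zero, i.e. `μ*([0,1] \ A) = 1`. -/
theorem stmt0 :
    ∃ f : ℕ → ℝ → ℝ,
      (∀ x ∈ Set.Icc (0:ℝ) 1, ∀ n : ℕ, f (n + 1) x ≤ f n x) ∧
      (∀ x ∈ Set.Icc (0:ℝ) 1, Tendsto (fun n => f n x) atTop (nhds 0)) ∧
      (∀ A ⊆ Set.Icc (0:ℝ) 1,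
        TendstoUniformlyOn f 0 atTop A → volume (Set.Icc (0:ℝ) 1 \ A) = 1) := by
  classical
  refine ⟨fun n x => if n ≤ Encodable.encode (Stmt0Aux.q x) then (1:ℝ) else 0, ?_, ?_, ?_⟩
  · intro x _ n
    by_cases h : n + 1 ≤ Encodable.encode (Stmt0Aux.q x)
    · simp [h, Nat.le_of_succ_le h]
    · simp only [h, if_false]
      split <;> norm_num
  · intro x _
    apply Tendsto.congr' _ tendsto_const_nhds
    filter_upwards [eventually_ge_atTop (Encodable.encode (Stmt0Aux.q x) + 1)] with n hn
    have : ¬ n ≤ Encodable.encode (Stmt0Aux.q x) := by omega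
    simp [this]
  · intro A hA hunif
    rw [Metric.tendstoUniformlyOn_iff] at hunif
    obtain ⟨N, hN⟩ := (hunif (1/2) (by norm_num)).exists
    have hAsub : A ⊆ {x : ℝ | Encodable.encode (Stmt0Aux.q x) < N} := by
      intro x hx
      have := hN x hx
      by_contra hc
      simp only [Set.mem_setOf_eq, not_lt] at hc
      simp only [Pi.zero_apply, if_pos hc, dist_zero_left, norm_one] at this
      norm_num at this
    by_contra hne
    have hle : volume (Set.Icc (0:ℝ) 1 \ A) ≤ 1 := by
      calc volume (Set.Icc (0:ℝ) 1 \ A) ≤ volume (Set.Icc (0:ℝ) 1) :=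
            measure_mono (Set.diff_subset)
        _ = 1 := by simp
    have hlt : volume (Set.Icc (0:ℝ) 1 \ A) < 1 := lt_of_le_of_ne hle hne
    obtain ⟨M, hMsup, hMmeas, hMvol⟩ := exists_measurable_superset volume
      (Set.Icc (0:ℝ) 1 \ A)
    set T : Set ℝ := Set.Icc (0:ℝ) 1 \ M with hT
    have hTmeas : MeasurableSet T := measurableSet_Icc.diff hMmeas
    have hTsubA : T ⊆ A := by
      intro x ⟨hx1, hx2⟩
      by_contra hxA
      exact hx2 (hMsup ⟨hx1, hxA⟩)
    have hTzero : volume T = 0 :=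
      Stmt0Aux.key N T hTmeas (fun x hx => hAsub (hTsubA hx))
    have hcover : Set.Icc (0:ℝ) 1 ⊆ M ∪ T := by
      intro x hx
      by_cases hxM : x ∈ M
      · exact Or.inl hxM
      · exact Or.inr ⟨hx, hxM⟩
    have : (1 : ℝ≥0∞) ≤ volume M + volume T :=
      le_trans (by simp [Real.volume_Icc]) (le_trans (measure_mono hcover) (measure_union_le M T))
    rw [hTzero, add_zero, hMvol] at this
    exact absurd this (not_le.mpr hlt)
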